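/- Let K be the path-structured kernel tensor built from matrices K^1,…,K^{s−1}, let U be the rank-one tensor built from vectors u_1,…,u_s with strictly positive entries, and let μ_σ ∈ ℝ^n for σ ∈ {1,…,s}. Then for every σ ∈ {1,…,s}, the multimarginal Sinkhorn update satisfies u_σ ⊙ μ_σ ⊘ proj_σ(K⊙U) = μ_σ ⊘ (L_σ ⊙ R_σ), where ⊘ denotes entrywise division; in particular, the updated value of u_σ does not depend on the current value of u_σ. -/
import Mathlib

open Finset Matrix

/-- Marginal projection of an order-`s` tensor on `n` points. -/
noncomputable def proj {n s : ℕ} (M : (Fin s → Fin n) → ℝ) (σ : Fin s) : Fin n → ℝ :=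
  fun j => ∑ i : Fin s → Fin n, if i σ = j then M i else 0

/-- Path-structured kernel tensor built from matrices `Km 0, …, Km (s-2)`
(0-indexed versions of `K^1, …, K^{s-1}`). -/
noncomputable def pathK {n : ℕ} (s : ℕ) (Km : ℕ → Matrix (Fin n) (Fin n) ℝ) :
    (Fin s → Fin n) → ℝ :=
  fun i => ∏ σ : Fin (s - 1),
    Km σ.1 (i ⟨σ.1, by have := σ.isLt; omega⟩) (i ⟨σ.1 + 1, by have := σ.isLt; omega⟩)

/-- Rank-one tensor built from vectors `u 0, …, u (s-1)`. -/
noncomputable def rankOne {n : ℕ} (s : ℕ) (u : ℕ → Fin n → ℝ) : (Fin s → Fin n) → ℝ :=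
  fun i => ∏ σ : Fin s, u σ.1 (i σ)

/-- Left vectors: `L_1 = 𝟙`, `L_{σ+1} = (K^σ)ᵀ (u_σ ⊙ L_σ)` (0-indexed). -/
noncomputable def Lvec {n : ℕ} (Km : ℕ → Matrix (Fin n) (Fin n) ℝ) (u : ℕ → Fin n → ℝ) :
    ℕ → Fin n → ℝ
  | 0 => 1
  | σ + 1 => (Km σ)ᵀ *ᵥ (u σ * Lvec Km u σ)

/-- Right vectors: `R_s = 𝟙`, `R_σ = K^σ (u_{σ+1} ⊙ R_{σ+1})` (0-indexed: `R_{s-1} = 𝟙`). -/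
noncomputable def Rvec {n : ℕ} (s : ℕ) (Km : ℕ → Matrix (Fin n) (Fin n) ℝ) (u : ℕ → Fin n → ℝ)
    (σ : ℕ) : Fin n → ℝ :=
  if h : σ < s - 1 then Km σ *ᵥ (u (σ + 1) * Rvec s Km u (σ + 1)) else 1
  termination_by s - 1 - σ
  decreasing_by omega

section Aux

variable {n : ℕ}

private lemma prod_fin_congr {a b : ℕ} (h : a = b) (f : Fin a → ℝ) (g : Fin b → ℝ)
    (hfg : ∀ t (ht : t < a) (ht' : t < b), f ⟨t, ht⟩ = g ⟨t, ht'⟩) :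
    ∏ x, f x = ∏ x, g x := by
  subst h
  exact Finset.prod_congr rfl fun x _ => by
    rcases x with ⟨t, ht⟩; exact hfg t ht ht

private lemma sumConsSplit {m : ℕ} (F : (Fin (m+1) → Fin n) → ℝ) :
    ∑ i : Fin (m+1) → Fin n, F i
      = ∑ a : Fin n, ∑ i' : Fin m → Fin n, F (Fin.cons a i') := by
  rw [← Fintype.sum_equiv (Fin.consEquiv fun _ => Fin n)
    (fun p => F (Fin.cons p.1 p.2)) F (fun p => rfl), Fintype.sum_prod_type]

private lemma cons_mk_zero {m : ℕ} (a : Fin n) (i' : Fin m → Fin n) (h : 0 < m+1) :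
    @Fin.cons m (fun _ => Fin n) a i' ⟨0, h⟩ = a := @Fin.cons_zero m (fun _ => Fin n) a i'

private lemma cons_mk_succ {m : ℕ} (t : ℕ) (a : Fin n) (i' : Fin m → Fin n) (h : t+1 < m+1) :
    @Fin.cons m (fun _ => Fin n) a i' ⟨t+1, h⟩ = i' ⟨t, Nat.lt_of_succ_lt_succ h⟩ :=
  @Fin.cons_succ m (fun _ => Fin n) a i' ⟨t, Nat.lt_of_succ_lt_succ h⟩

private lemma pathK_one (Km : ℕ → Matrix (Fin n) (Fin n) ℝ) (i : Fin 1 → Fin n) :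
    pathK 1 Km i = 1 := by
  unfold pathK
  apply Finset.prod_eq_one
  intro x _
  exact absurd x.isLt (by omega)

private lemma pathK_cons (k : ℕ) (Km : ℕ → Matrix (Fin n) (Fin n) ℝ) (a : Fin n)
    (i' : Fin (k+1) → Fin n) :
    pathK (k+2) Km (Fin.cons a i')
      = Km 0 a (i' ⟨0, k.succ_pos⟩) * pathK (k+1) (fun t => Km (t+1)) i' := by
  unfold pathK
  refine (prod_fin_congr (show k+2-1 = k+1 by omega) _
    (fun σ : Fin (k+1) => Km σ.1
      (@Fin.cons (k+1) (fun _ => Fin n) a i' ⟨σ.1, by omega⟩)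
      (@Fin.cons (k+1) (fun _ => Fin n) a i' ⟨σ.1+1, by omega⟩))
    (fun t ht ht' => rfl)).trans ?_
  rw [Fin.prod_univ_succ]
  simp only [Fin.val_zero, Fin.val_succ, cons_mk_zero, cons_mk_succ]
  congr 1

private lemma rankOne_cons (m : ℕ) (u : ℕ → Fin n → ℝ) (a : Fin n) (i' : Fin m → Fin n) :
    rankOne (m+1) u (Fin.cons a i') = u 0 a * rankOne m (fun t => u (t+1)) i' := by
  unfold rankOne
  rw [Fin.prod_univ_succ]
  simp [Fin.cons_zero, Fin.cons_succ, Fin.val_succ, Fin.val_zero]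

end Aux

section Vec
variable {n : ℕ}

private lemma Rvec_shift (s σ : ℕ) (Km : ℕ → Matrix (Fin n) (Fin n) ℝ) (u : ℕ → Fin n → ℝ) :
    Rvec s (fun t => Km (t+1)) (fun t => u (t+1)) σ = Rvec (s+1) Km u (σ+1) := by
  conv_lhs => rw [Rvec]
  conv_rhs => rw [Rvec]
  by_cases h : σ < s - 1
  · rw [dif_pos h, dif_pos (by omega : σ + 1 < s + 1 - 1), Rvec_shift s (σ+1)]
  · rw [dif_neg h, dif_neg (by omega : ¬ (σ + 1 < s + 1 - 1))]
  termination_by s - 1 - σ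
  decreasing_by omega

private lemma Rvec_congr (s σ : ℕ) (Km : ℕ → Matrix (Fin n) (Fin n) ℝ) (u₁ u₂ : ℕ → Fin n → ℝ)
    (h : ∀ τ, 1 ≤ τ → u₁ τ = u₂ τ) :
    Rvec s Km u₁ σ = Rvec s Km u₂ σ := by
  conv_lhs => rw [Rvec]
  conv_rhs => rw [Rvec]
  by_cases hσ : σ < s - 1
  · rw [dif_pos hσ, dif_pos hσ, h (σ+1) (by omega), Rvec_congr s (σ+1) Km u₁ u₂ h]
  · rw [dif_neg hσ, dif_neg hσ]
  termination_by s - 1 - σ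
  decreasing_by omega

private lemma Lvec_shift (Km : ℕ → Matrix (Fin n) (Fin n) ℝ) (u u' : ℕ → Fin n → ℝ)
    (h0 : u' 0 = u 1 * Lvec Km u 1) (h1 : ∀ t, 1 ≤ t → u' t = u (t+1)) :
    ∀ τ, Lvec (fun t => Km (t+1)) u' (τ+1) = Lvec Km u (τ+2) := by
  intro τ
  induction τ with
  | zero => simp only [Lvec, h0, mul_one]
  | succ ρ ih =>
      show (Km (ρ+2))ᵀ *ᵥ (u' (ρ+1) * Lvec (fun t => Km (t+1)) u' (ρ+1))
        = (Km (ρ+2))ᵀ *ᵥ (u (ρ+2) * Lvec Km u (ρ+2))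
      rw [ih, h1 (ρ+1) (by omega)]

end Vec

section Core
variable {n : ℕ}

private lemma sum_mul_fiber {α : Type*} [Fintype α] (c : Fin n → ℝ) (f : α → ℝ) (p : α → Fin n) :
    ∑ b : Fin n, c b * ∑ i : α, (if p i = b then f i else 0) = ∑ i : α, c (p i) * f i := by
  simp only [Finset.mul_sum]
  rw [Finset.sum_comm]
  refine Finset.sum_congr rfl fun i _ => ?_
  have h : ∀ b, c b * (if p i = b then f i else 0) = if p i = b then c (p i) * f i else 0 := by
    intro b
    split
    · next hb => rw [hb]
    · rw [mul_zero]
  simp [h]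

private lemma rankOne_scale (k : ℕ) (u : ℕ → Fin n → ℝ) (c : Fin n → ℝ)
    (i' : Fin (k+1) → Fin n) :
    rankOne (k+1) (fun t => if t = 0 then u 1 * c else u (t+1)) i'
      = c (i' ⟨0, k.succ_pos⟩) * rankOne (k+1) (fun t => u (t+1)) i' := by
  unfold rankOne
  rw [Fin.prod_univ_succ, Fin.prod_univ_succ]
  simp only [Fin.val_zero, Fin.val_succ, Fin.mk_zero, Pi.mul_apply, Nat.add_one_ne_zero,
    if_false, reduceIte]
  ring

private lemma proj_zero (s : ℕ) (hs : 0 < s) (Km : ℕ → Matrix (Fin n) (Fin n) ℝ)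
    (u : ℕ → Fin n → ℝ) (j : Fin n) :
    (∑ i : Fin s → Fin n, if i ⟨0, hs⟩ = j then pathK s Km i * rankOne s u i else 0)
      = u 0 j * Rvec s Km u 0 j := by
  obtain ⟨m, rfl⟩ : ∃ m, s = m + 1 := ⟨s-1, by omega⟩
  rcases Nat.eq_zero_or_pos m with rfl | hm
  · rw [sumConsSplit]
    have h1 : ∀ (a : Fin n) (i' : Fin 0 → Fin n),
        (if @Fin.cons 0 (fun _ => Fin n) a i' ⟨0, hs⟩ = j
          then pathK (0+1) Km (Fin.cons a i') * rankOne (0+1) u (Fin.cons a i') else 0)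
          = if a = j then u 0 a else 0 := by
      intro a i'
      rw [cons_mk_zero]
      congr 1
      rw [show pathK (0+1) Km (Fin.cons a i') = 1 from pathK_one Km _, one_mul]
      unfold rankOne
      rw [Fin.prod_univ_succ]
      simp
    simp only [h1]
    rw [Rvec, dif_neg (by omega : ¬ (0:ℕ) < 0+1-1)]
    simp
  · obtain ⟨k, rfl⟩ : ∃ k, m = k + 1 := ⟨m-1, by omega⟩
    rw [sumConsSplit]
    have h1 : ∀ (a : Fin n) (i' : Fin (k+1) → Fin n),
        (if @Fin.cons (k+1) (fun _ => Fin n) a i' ⟨0, hs⟩ = j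
          then pathK (k+1+1) Km (Fin.cons a i') * rankOne (k+1+1) u (Fin.cons a i') else 0)
          = if a = j then u 0 a * (Km 0 a (i' ⟨0, k.succ_pos⟩) *
              (pathK (k+1) (fun t => Km (t+1)) i' * rankOne (k+1) (fun t => u (t+1)) i'))
            else 0 := by
      intro a i'
      rw [cons_mk_zero, pathK_cons, rankOne_cons]
      split
      · ring
      · rfl
    simp only [h1]
    rw [Finset.sum_comm]
    simp only [Finset.sum_ite_eq', Finset.mem_univ, if_true]
    rw [← Finset.mul_sum]
    congr 1
    have hR : ∀ b : Fin n, u 1 b * Rvec (k+1+1) Km u 1 b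
        = ∑ i' : Fin (k+1) → Fin n, (if i' ⟨0, k.succ_pos⟩ = b
            then pathK (k+1) (fun t => Km (t+1)) i' * rankOne (k+1) (fun t => u (t+1)) i'
            else 0) := by
      intro b
      have h1' := proj_zero (k+1) k.succ_pos (fun t => Km (t+1)) (fun t => u (t+1)) b
      have h2' := Rvec_shift (k+1) 0 Km u
      simp only [zero_add] at h1' h2'
      rw [h1', h2']
    rw [Rvec, dif_pos (show (0:ℕ) < k+1+1-1 by omega)]
    show _ = (Km 0 *ᵥ (u (0+1) * Rvec (k+1+1) Km u (0+1))) j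
    simp only [zero_add, Matrix.mulVec, dotProduct, Pi.mul_apply]
    simp only [hR]
    exact (sum_mul_fiber (Km 0 j) _ (fun i' : Fin (k+1) → Fin n => i' ⟨0, k.succ_pos⟩)).symm

end Core

section Main
variable {n : ℕ}

private lemma proj_marg (σ : ℕ) : ∀ (s : ℕ) (hσ : σ < s) (Km : ℕ → Matrix (Fin n) (Fin n) ℝ)
    (u : ℕ → Fin n → ℝ) (j : Fin n),
    (∑ i : Fin s → Fin n, if i ⟨σ, hσ⟩ = j then pathK s Km i * rankOne s u i else 0)
      = u σ j * (Lvec Km u σ j * Rvec s Km u σ j) := by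
  induction σ with
  | zero =>
      intro s hσ Km u j
      rw [proj_zero s hσ Km u j]
      simp [Lvec]
  | succ τ ih =>
      intro s hσ Km u j
      obtain ⟨k, rfl⟩ : ∃ k, s = k + 1 + 1 := ⟨s-2, by omega⟩
      have hτ : τ < k + 1 := by omega
      rw [sumConsSplit]
      have h1 : ∀ (a : Fin n) (i' : Fin (k+1) → Fin n),
          (if @Fin.cons (k+1) (fun _ => Fin n) a i' ⟨τ+1, hσ⟩ = j
            then pathK (k+1+1) Km (Fin.cons a i') * rankOne (k+1+1) u (Fin.cons a i') else 0)
            = if i' ⟨τ, hτ⟩ = j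
              then (u 0 a * Km 0 a (i' ⟨0, k.succ_pos⟩)) *
                (pathK (k+1) (fun t => Km (t+1)) i' * rankOne (k+1) (fun t => u (t+1)) i')
              else 0 := by
        intro a i'
        rw [cons_mk_succ, pathK_cons, rankOne_cons]
        split
        · ring
        · rfl
      simp only [h1]
      rw [Finset.sum_comm]
      have h2 : ∀ i' : Fin (k+1) → Fin n,
          (∑ a : Fin n, if i' ⟨τ, hτ⟩ = j
            then (u 0 a * Km 0 a (i' ⟨0, k.succ_pos⟩)) *
              (pathK (k+1) (fun t => Km (t+1)) i' * rankOne (k+1) (fun t => u (t+1)) i')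
            else 0)
            = if i' ⟨τ, hτ⟩ = j
              then pathK (k+1) (fun t => Km (t+1)) i' *
                rankOne (k+1) (fun t => if t = 0 then u 1 * ((Km 0)ᵀ *ᵥ u 0) else u (t+1)) i'
              else 0 := by
        intro i'
        split
        · rw [rankOne_scale k u ((Km 0)ᵀ *ᵥ u 0) i', ← Finset.sum_mul]
          have hc : ((Km 0)ᵀ *ᵥ u 0) (i' ⟨0, k.succ_pos⟩)
              = ∑ a : Fin n, u 0 a * Km 0 a (i' ⟨0, k.succ_pos⟩) := by
            simp [Matrix.mulVec, dotProduct, Matrix.transpose_apply, mul_comm]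
          rw [hc]
          ring
        · simp
      simp only [h2]
      rw [ih (k+1) hτ (fun t => Km (t+1))
        (fun t => if t = 0 then u 1 * ((Km 0)ᵀ *ᵥ u 0) else u (t+1)) j]
      have h0 : (fun t => if t = 0 then u 1 * ((Km 0)ᵀ *ᵥ u 0) else u (t+1)) 0
          = u 1 * Lvec Km u 1 := by
        simp [Lvec]
      have h1t : ∀ t, 1 ≤ t →
          (fun t => if t = 0 then u 1 * ((Km 0)ᵀ *ᵥ u 0) else u (t+1)) t = u (t+1) := by
        intro t ht
        simp only [if_neg (by omega : ¬ t = 0)]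
      rw [Rvec_congr (k+1) τ (fun t => Km (t+1)) _ (fun t => u (t+1)) h1t,
        Rvec_shift (k+1) τ Km u]
      have hLu : (fun t => if t = 0 then u 1 * ((Km 0)ᵀ *ᵥ u 0) else u (t+1)) τ j *
          Lvec (fun t => Km (t+1)) (fun t => if t = 0 then u 1 * ((Km 0)ᵀ *ᵥ u 0) else u (t+1)) τ j
          = u (τ+1) j * Lvec Km u (τ+1) j := by
        cases τ with
        | zero =>
            rw [h0]
            simp [Lvec]
        | succ ρ =>
            rw [Lvec_shift Km u _ h0 h1t ρ, h1t (ρ+1) (by omega)]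
      rw [← mul_assoc, hLu, mul_assoc]

end Main

/-- the multimarginal Sinkhorn update
`u_σ ⊙ μ_σ ⊘ proj_σ(K⊙U)` equals `μ_σ ⊘ (L_σ ⊙ R_σ)`; in particular the updated value
of `u_σ` does not depend on the current value of `u_σ`. -/
theorem sinkhorn_update_simplification
    {n s : ℕ} (hn : 1 ≤ n) (hs : 2 ≤ s)
    (Km : ℕ → Matrix (Fin n) (Fin n) ℝ)
    (hKm : ∀ σ, σ < s - 1 → ∀ a b, 0 < Km σ a b)
    (u : ℕ → Fin n → ℝ)
    (hu : ∀ σ, σ < s → ∀ j, 0 < u σ j)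
    (μ : ℕ → Fin n → ℝ)
    (σ : Fin s) (j : Fin n) :
    u σ.1 j * μ σ.1 j / proj (fun i => pathK s Km i * rankOne s u i) σ j
      = μ σ.1 j / (Lvec Km u σ.1 j * Rvec s Km u σ.1 j) := by
  have hproj : proj (fun i => pathK s Km i * rankOne s u i) σ j
      = u σ.1 j * (Lvec Km u σ.1 j * Rvec s Km u σ.1 j) := by
    have h := proj_marg σ.1 s σ.2 Km u j
    unfold proj
    simpa using h
  rw [hproj]
  exact mul_div_mul_left _ _ (ne_of_gt (hu σ.1 σ.2 j))
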